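/- When G is a path and all agents have identical additive valuations with nonnegative item values (u_i = u for all i, where u is additive and u({v}) ≥ 0 for every item v), there exists a connected allocation that is both EF1 and Pareto-optimal. -/

import Mathlib

open Finset

/-- A finite set of items is *connected* in the item graph `G` if the induced
subgraph is preconnected (the empty set counts as connected). -/
def ConnSet {V : Type*} (G : SimpleGraph V) (X : Finset V) : Prop :=
  (G.induce (X : Set V)).Preconnected

/-- `π` is a connected allocation of the items in `R` among the agents in `N`. -/
def IsConnAllocOn {V N : Type*} [DecidableEq V] (G : SimpleGraph V)
    (R : Finset V) (π : N → Finset V) : Prop :=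
  (∀ i, π i ⊆ R) ∧ (∀ i, ConnSet G (π i)) ∧
    (∀ i j, i ≠ j → Disjoint (π i) (π j)) ∧ (∀ v ∈ R, ∃ i, v ∈ π i)

/-- `π` is a connected allocation of all items among the agents in `N`. -/
def IsConnAlloc {V N : Type*} [Fintype V] [DecidableEq V] (G : SimpleGraph V)
    (π : N → Finset V) : Prop :=
  IsConnAllocOn G Finset.univ π

/-- `π'` is a Pareto-improvement of `π`. -/
def ParetoImproves {V N : Type*} (u : N → Finset V → ℝ)
    (π' π : N → Finset V) : Prop :=
  (∀ i, u i (π i) ≤ u i (π' i)) ∧ ∃ i, u i (π i) < u i (π' i)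

/-- `π` is Pareto-optimal: no connected allocation Pareto-improves it. -/
def ParetoOptimal {V N : Type*} [Fintype V] [DecidableEq V] (G : SimpleGraph V)
    (u : N → Finset V → ℝ) (π : N → Finset V) : Prop :=
  ∀ π', IsConnAlloc G π' → ¬ ParetoImproves u π' π

/-- `π` satisfies EF1: any envy can be removed by deleting a single item
(keeping the envied bundle connected). -/
def EF1 {V N : Type*} [Fintype V] [DecidableEq V] (G : SimpleGraph V)
    (u : N → Finset V → ℝ) (π : N → Finset V) : Prop :=
  ∀ i j, u i (π j) ≤ u i (π i) ∨
    ∃ v ∈ π j, ConnSet G ((π j).erase v) ∧ u i ((π j).erase v) ≤ u i (π i)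

/-- The maximin fair share of an agent with valuation `u`, when the items are
divided into `|N|` connected bundles. -/
noncomputable def mmsVal {V : Type*} (N : Type*) [Fintype V] [DecidableEq V]
    (G : SimpleGraph V) (u : Finset V → ℝ) : ℝ :=
  sSup {x : ℝ | ∃ P : N → Finset V, IsConnAlloc G P ∧
    x = sInf (Set.range fun j => u (P j))}

/-- `π` is an MMS allocation: every agent gets at least her maximin fair share. -/
def IsMMS {V N : Type*} [Fintype V] [DecidableEq V] (G : SimpleGraph V)
    (u : N → Finset V → ℝ) (π : N → Finset V) : Prop :=
  ∀ i, mmsVal N G (u i) ≤ u i (π i)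

namespace Stmt12


/-- Prefix-sum style interval value. -/
noncomputable def ff (W : ℕ → ℝ) (a b : ℕ) : ℝ := ∑ k ∈ Finset.Ico a b, W k

/-- An interval `[a,b)` is trim-ok for threshold `t`: removing one endpoint
brings its value down to at most `t`. -/
def TrimOk (W : ℕ → ℝ) (t : ℝ) (a b : ℕ) : Prop :=
  ff W a (b - 1) ≤ t ∨ ff W (a + 1) b ≤ t

/-- `[a,b)` can be split into `k` consecutive intervals each of value ≥ t. -/
def MinWit (W : ℕ → ℝ) (t : ℝ) : ℕ → ℕ → ℕ → Prop
  | 0, a, b => a = b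
  | k+1, a, b => ∃ c, a ≤ c ∧ c ≤ b ∧ t ≤ ff W a c ∧ MinWit W t k c b

/-- `[a,b)` can be split into `k` consecutive trim-ok intervals. -/
def TrimWit (W : ℕ → ℝ) (t : ℝ) : ℕ → ℕ → ℕ → Prop
  | 0, a, b => a = b
  | k+1, a, b => ∃ c, a ≤ c ∧ c ≤ b ∧ TrimOk W t a c ∧ TrimWit W t k c b

/-- `[a,b)` can be split into `k` consecutive intervals, each of value ≥ t and trim-ok. -/
def GoodWit (W : ℕ → ℝ) (t : ℝ) : ℕ → ℕ → ℕ → Prop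
  | 0, a, b => a = b
  | k+1, a, b => ∃ c, a ≤ c ∧ c ≤ b ∧ t ≤ ff W a c ∧ TrimOk W t a c ∧ GoodWit W t k c b

variable {W : ℕ → ℝ} {t : ℝ}

lemma ff_nonneg (hW : ∀ k, 0 ≤ W k) (a b : ℕ) : 0 ≤ ff W a b :=
  Finset.sum_nonneg fun k _ => hW k

lemma ff_mono (hW : ∀ k, 0 ≤ W k) {a a' b b' : ℕ} (ha : a ≤ a') (hb : b' ≤ b) :
    ff W a' b' ≤ ff W a b := by
  apply Finset.sum_le_sum_of_subset_of_nonneg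
  · intro k hk
    rw [Finset.mem_Ico] at hk ⊢
    omega
  · intro k _ _; exact hW k

lemma ff_split (a b c : ℕ) (hab : a ≤ b) (hbc : b ≤ c) :
    ff W a c = ff W a b + ff W b c :=
  (Finset.sum_Ico_consecutive _ hab hbc).symm

lemma ff_self (a : ℕ) : ff W a a = 0 := by simp [ff]

lemma ff_zero_of_le {a b : ℕ} (h : b ≤ a) : ff W a b = 0 := by
  unfold ff
  rw [Finset.Ico_eq_empty (by omega), Finset.sum_empty]

/-- Any subinterval of a trim-ok interval is trim-ok. -/
lemma TrimOk.sub (hW : ∀ k, 0 ≤ W k) {a a' b b' : ℕ} (h : TrimOk W t a b)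
    (ha : a ≤ a') (hb : b' ≤ b) : TrimOk W t a' b' := by
  rcases h with h | h
  · exact Or.inl (le_trans (ff_mono hW ha (by omega)) h)
  · exact Or.inr (le_trans (ff_mono hW (by omega) hb) h)

lemma TrimOk.self (ht : 0 ≤ t) (a : ℕ) : TrimOk W t a a :=
  Or.inr (by rw [ff_zero_of_le (by omega)]; exact ht)

lemma TrimOk.of_val_le {a b : ℕ} (hW : ∀ k, 0 ≤ W k) (h : ff W a b ≤ t) : TrimOk W t a b :=
  Or.inl (le_trans (ff_mono hW le_rfl (by omega)) h)

lemma TrimWit.nil (ht : 0 ≤ t) : ∀ k b, TrimWit W t k b b := by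
  intro k
  induction k with
  | zero => intro b; rfl
  | succ k ih => intro b; exact ⟨b, le_rfl, le_rfl, TrimOk.self ht b, ih b⟩

lemma MinWit.anti {t' : ℝ} (h' : t' ≤ t) :
    ∀ k a b, MinWit W t k a b → MinWit W t' k a b := by
  intro k
  induction k with
  | zero => intro a b h; exact h
  | succ k ih =>
    intro a b h
    obtain ⟨c, h1, h2, h3, h4⟩ := h
    exact ⟨c, h1, h2, le_trans h' h3, ih c b h4⟩

lemma TrimWit.mono {t' : ℝ} (h' : t ≤ t') :
    ∀ k a b, TrimWit W t k a b → TrimWit W t' k a b := by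
  intro k
  induction k with
  | zero => intro a b h; exact h
  | succ k ih =>
    intro a b h
    obtain ⟨c, h1, h2, h3, h4⟩ := h
    refine ⟨c, h1, h2, ?_, ih c b h4⟩
    rcases h3 with h3 | h3
    · exact Or.inl (le_trans h3 h')
    · exact Or.inr (le_trans h3 h')

/-- Extend the first bundle of a min-witness to the left. -/
lemma MinWit.extend (hW : ∀ k, 0 ≤ W k) {k a c b : ℕ} (hk : 1 ≤ k) (hac : a ≤ c)
    (h : MinWit W t k c b) : MinWit W t k a b := by
  obtain ⟨k, rfl⟩ : ∃ k', k = k' + 1 := ⟨k - 1, by omega⟩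
  obtain ⟨c₂, h1, h2, h3, h4⟩ := h
  exact ⟨c₂, le_trans hac h1, h2, le_trans h3 (ff_mono hW hac le_rfl), h4⟩

/-- Truncate a trim-witness from the left. -/
lemma TrimWit.trunc (hW : ∀ k, 0 ≤ W k) (ht : 0 ≤ t) :
    ∀ k q b c, q ≤ c → c ≤ b → TrimWit W t k q b → TrimWit W t k c b := by
  intro k
  induction k with
  | zero =>
    intro q b c h1 h2 h3
    have h3' : q = b := h3
    show c = b
    omega
  | succ k ih =>
    intro q b c h1 h2 h3
    obtain ⟨q₂, g1, g2, g3, g4⟩ := h3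
    rcases le_or_gt c q₂ with h | h
    · exact ⟨q₂, h, g2, g3.sub hW h1 le_rfl, g4⟩
    · exact ⟨c, le_rfl, h2, TrimOk.self ht c, ih q₂ b c (le_of_lt h) h2 g4⟩

/-- Key shifting lemma: a trim-witness for `[p,b)` with `p ≥ 1` can either be
extended one step to the left, or it certifies a min-witness. -/
lemma shift (hW : ∀ k, 0 ≤ W k) (ht : 0 ≤ t) :
    ∀ k p b, 1 ≤ p → TrimWit W t k p b →
      TrimWit W t k (p - 1) b ∨ MinWit W t k p b := by
  intro k
  induction k with
  | zero => intro p b _ h; exact Or.inr h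
  | succ k ih =>
    intro p b hp h
    obtain ⟨q, hpq, hqb, htrim, hrest⟩ := h
    revert hpq hqb htrim hrest
    induction q using Nat.strong_induction_on with
    | _ q IHq =>
      intro hpq hqb htrim hrest
      rcases le_or_gt (ff W p q) t with hle | hlt
      · left
        refine ⟨q, by omega, hqb, Or.inr ?_, hrest⟩
        have : p - 1 + 1 = p := by omega
        rw [this]; exact hle
      · have hpq : p < q := by
          by_contra hc
          rw [ff_zero_of_le (by omega)] at hlt
          linarith
        rcases ih q b (by omega) hrest with h1 | h2
        · exact IHq (q - 1) (by omega) (by omega) (by omega)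
            (htrim.sub hW le_rfl (by omega)) h1
        · exact Or.inr ⟨q, le_of_lt hpq, hqb, le_of_lt hlt, h2⟩

/-- Main combination theorem: a min-witness and a trim-witness at the same
threshold can be combined into a single good witness. -/
theorem combine (hW : ∀ k, 0 ≤ W k) (ht : 0 ≤ t) :
    ∀ k a b, MinWit W t k a b → TrimWit W t k a b → GoodWit W t k a b := by
  intro k
  induction k with
  | zero => intro a b h _; exact h
  | succ k ih =>
    intro a b hmin htrim
    classical
    rcases Nat.eq_zero_or_pos k with rfl | hk
    · -- single bundle
      obtain ⟨c, hc1, hc2, hc3, (hc4 : c = b)⟩ := hmin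
      obtain ⟨d, hd1, hd2, hd3, (hd4 : d = b)⟩ := htrim
      refine ⟨c, hc1, hc2, hc3, ?_, hc4⟩
      rw [hc4, ← hd4]
      exact hd3
    -- k ≥ 1
    have hab : a ≤ b := by
      obtain ⟨c, hc1, hc2, _, _⟩ := hmin; omega
    obtain ⟨ρ, hρS, hρmax⟩ : ∃ ρ ∈ (Finset.Icc a b).filter
        (fun c => t ≤ ff W a c ∧ MinWit W t k c b),
        ∀ x ∈ (Finset.Icc a b).filter (fun c => t ≤ ff W a c ∧ MinWit W t k c b), x ≤ ρ := by
      have hne : ((Finset.Icc a b).filter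
          (fun c => t ≤ ff W a c ∧ MinWit W t k c b)).Nonempty := by
        obtain ⟨c, hc1, hc2, hc3, hc4⟩ := hmin
        exact ⟨c, by rw [Finset.mem_filter, Finset.mem_Icc]; exact ⟨⟨hc1, hc2⟩, hc3, hc4⟩⟩
      exact ⟨_, Finset.max'_mem _ hne, fun x hx => Finset.le_max' _ x hx⟩
    rw [Finset.mem_filter, Finset.mem_Icc] at hρS
    obtain ⟨⟨hρa, hρb⟩, hρf, hρmin⟩ := hρS
    obtain ⟨d, hdS, hdmin⟩ : ∃ d ∈ (Finset.Icc a b).filter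
        (fun c => TrimOk W t a c ∧ TrimWit W t k c b),
        ∀ x ∈ (Finset.Icc a b).filter (fun c => TrimOk W t a c ∧ TrimWit W t k c b), d ≤ x := by
      have hne : ((Finset.Icc a b).filter
          (fun c => TrimOk W t a c ∧ TrimWit W t k c b)).Nonempty := by
        obtain ⟨c, hc1, hc2, hc3, hc4⟩ := htrim
        exact ⟨c, by rw [Finset.mem_filter, Finset.mem_Icc]; exact ⟨⟨hc1, hc2⟩, hc3, hc4⟩⟩
      exact ⟨_, Finset.min'_mem _ hne, fun x hx => Finset.min'_le _ x hx⟩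
    rw [Finset.mem_filter, Finset.mem_Icc] at hdS
    obtain ⟨⟨hda, hdb⟩, hdtrim, hdwit⟩ := hdS
    have hdρ : d ≤ ρ := by
      by_contra hc
      push_neg at hc
      rcases shift hW ht k d b (by omega) hdwit with h1 | h2
      · have : d ≤ d - 1 := hdmin _ (by
          rw [Finset.mem_filter, Finset.mem_Icc]
          exact ⟨⟨by omega, by omega⟩, hdtrim.sub hW le_rfl (by omega), h1⟩)
        omega
      · have : d ≤ ρ := hρmax _ (by
          rw [Finset.mem_filter, Finset.mem_Icc]
          exact ⟨⟨by omega, hdb⟩, le_trans hρf (ff_mono hW le_rfl (by omega)), h2⟩)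
        omega
    obtain ⟨c, hcS, hcmin⟩ : ∃ c ∈ (Finset.Icc d b).filter (fun x => t ≤ ff W a x),
        ∀ x ∈ (Finset.Icc d b).filter (fun x => t ≤ ff W a x), c ≤ x := by
      have hne : ((Finset.Icc d b).filter (fun x => t ≤ ff W a x)).Nonempty :=
        ⟨ρ, by rw [Finset.mem_filter, Finset.mem_Icc]; exact ⟨⟨hdρ, hρb⟩, hρf⟩⟩
      exact ⟨_, Finset.min'_mem _ hne, fun x hx => Finset.min'_le _ x hx⟩
    rw [Finset.mem_filter, Finset.mem_Icc] at hcS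
    obtain ⟨⟨hcd, hcb⟩, hcf⟩ := hcS
    have hcρ : c ≤ ρ := hcmin _ (by
      rw [Finset.mem_filter, Finset.mem_Icc]; exact ⟨⟨hdρ, hρb⟩, hρf⟩)
    have hctrim : TrimOk W t a c := by
      rcases Nat.eq_or_lt_of_le hcd with heq | hlt
      · rw [← heq]; exact hdtrim
      · have hnot : ¬ (t ≤ ff W a (c - 1)) := by
          intro hmem
          have : c ≤ c - 1 := hcmin _ (by
            rw [Finset.mem_filter, Finset.mem_Icc]
            exact ⟨⟨by omega, by omega⟩, hmem⟩)
          omega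
        push_neg at hnot
        exact Or.inl (le_of_lt hnot)
    have hsufftrim : TrimWit W t k c b := TrimWit.trunc hW ht k d b c hcd hcb hdwit
    have hsuffmin : MinWit W t k c b := MinWit.extend hW hk hcρ hρmin
    exact ⟨c, le_trans hda hcd, hcb, hcf, hctrim, ih c b hsuffmin hsufftrim⟩


variable {W : ℕ → ℝ}

noncomputable def mu (W : ℕ → ℝ) : ℕ → ℕ → ℕ → ℝ
  | 0, _, _ => 0
  | 1, a, b => ff W a b
  | (n+2), a, b => (insert b (Finset.Icc a b)).sup'
      (Finset.insert_nonempty _ _) (fun c => min (ff W a c) (mu W (n+1) c b))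



lemma mu_self (hW : ∀ k, 0 ≤ W k) : ∀ n b, mu W n b b = 0 := by
  intro n
  induction n using Nat.strong_induction_on with
  | _ n ih =>
    match n with
    | 0 => intro b; rfl
    | 1 => intro b; exact ff_self b
    | (n+2) =>
      intro b
      have hub : mu W (n+2) b b ≤ 0 := by
        apply Finset.sup'_le
        intro c hc
        have hcb : c = b := by
          rcases Finset.mem_insert.mp hc with h | h
          · exact h
          · rw [Finset.mem_Icc] at h; omega
        subst hcb
        rw [ff_self, ih (n+1) (by omega) c, min_self]
      have hlb : (0:ℝ) ≤ mu W (n+2) b b := by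
        have h := Finset.le_sup' (s := insert b (Finset.Icc b b))
          (fun x => min (ff W b x) (mu W (n+1) x b)) (Finset.mem_insert_self b _)
        have h2 : min (ff W b b) (mu W (n+1) b b) = 0 := by
          rw [ff_self, ih (n+1) (by omega) b, min_self]
        calc (0:ℝ) = min (ff W b b) (mu W (n+1) b b) := h2.symm
          _ ≤ _ := h
      linarith

lemma mu_nonneg (hW : ∀ k, 0 ≤ W k) : ∀ n a b, a ≤ b → 0 ≤ mu W n a b := by
  intro n
  induction n using Nat.strong_induction_on with
  | _ n ih =>
    match n with
    | 0 => intro a b _; exact le_refl 0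
    | 1 => intro a b _; exact ff_nonneg hW a b
    | (n+2) =>
      intro a b hab
      have h := Finset.le_sup' (s := insert b (Finset.Icc a b))
        (fun x => min (ff W a x) (mu W (n+1) x b)) (Finset.mem_insert_self b _)
      calc (0:ℝ) ≤ min (ff W a b) (mu W (n+1) b b) := by
            rw [mu_self hW]
            exact le_min (ff_nonneg hW a b) le_rfl
        _ ≤ _ := h

lemma mu_le (n a b c : ℕ) (hac : a ≤ c) (hcb : c ≤ b) :
    min (ff W a c) (mu W (n+1) c b) ≤ mu W (n+2) a b := by
  have h := Finset.le_sup' (s := insert b (Finset.Icc a b))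
    (fun x => min (ff W a x) (mu W (n+1) x b))
    (Finset.mem_insert_of_mem (Finset.mem_Icc.mpr ⟨hac, hcb⟩))
  exact h

lemma mu_attain (hW : ∀ k, 0 ≤ W k) :
    ∀ n a b, 1 ≤ n → a ≤ b → MinWit W (mu W n a b) n a b := by
  intro n
  induction n using Nat.strong_induction_on with
  | _ n ih =>
    match n with
    | 0 => intro a b h _; exact absurd h (by omega)
    | 1 =>
      intro a b _ hab
      exact ⟨b, hab, le_rfl, le_rfl, rfl⟩
    | (n+2) =>
      intro a b _ hab
      obtain ⟨c₀, hc₀mem, hc₀⟩ := Finset.exists_mem_eq_sup'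
        (Finset.insert_nonempty b (Finset.Icc a b))
        (fun c => min (ff W a c) (mu W (n+1) c b))
      have hc₀ab : a ≤ c₀ ∧ c₀ ≤ b := by
        rcases Finset.mem_insert.mp hc₀mem with h | h
        · omega
        · rw [Finset.mem_Icc] at h; exact h
      have hm : mu W (n+2) a b = min (ff W a c₀) (mu W (n+1) c₀ b) := hc₀
      refine ⟨c₀, hc₀ab.1, hc₀ab.2, ?_, ?_⟩
      · rw [hm]; exact min_le_left _ _
      · exact MinWit.anti (by rw [hm]; exact min_le_right _ _) (n+1) c₀ b
          (ih (n+1) (by omega) c₀ b (by omega) hc₀ab.2)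

/-- The crucial lemma: there is a trim-witness at threshold `mu`. -/
lemma trimwit_mu (hW : ∀ k, 0 ≤ W k) :
    ∀ n a b, 1 ≤ n → a ≤ b → TrimWit W (mu W n a b) n a b := by
  intro n
  induction n using Nat.strong_induction_on with
  | _ n ih =>
    match n with
    | 0 => intro a b h _; exact absurd h (by omega)
    | 1 =>
      intro a b _ hab
      refine ⟨b, hab, le_rfl, Or.inl (ff_mono hW le_rfl (by omega)), rfl⟩
    | (n+2) =>
      intro a b _ hab
      set t := mu W (n+2) a b with htdef
      have ht : 0 ≤ t := mu_nonneg hW _ a b hab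
      classical
      -- c* : largest c in [a,b] with ff a c ≤ mu (n+1) c b
      obtain ⟨cs, hcsS, hcsmax⟩ : ∃ cs ∈ (Finset.Icc a b).filter
          (fun x => ff W a x ≤ mu W (n+1) x b),
          ∀ x ∈ (Finset.Icc a b).filter (fun x => ff W a x ≤ mu W (n+1) x b), x ≤ cs := by
        have hne : ((Finset.Icc a b).filter
            (fun x => ff W a x ≤ mu W (n+1) x b)).Nonempty := by
          refine ⟨a, ?_⟩
          rw [Finset.mem_filter, Finset.mem_Icc]
          exact ⟨⟨le_rfl, hab⟩, by rw [ff_self]; exact mu_nonneg hW (n+1) a b hab⟩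
        exact ⟨_, Finset.max'_mem _ hne, fun x hx => Finset.le_max' _ x hx⟩
      rw [Finset.mem_filter, Finset.mem_Icc] at hcsS
      obtain ⟨⟨hcsa, hcsb⟩, hcsle⟩ := hcsS
      rcases Nat.eq_or_lt_of_le hcsb with heq | hlt
      · -- c* = b : whole interval has value ≤ 0, hence zero
        subst heq
        have hffb : ff W a cs ≤ 0 := by
          rw [mu_self hW] at hcsle; exact hcsle
        refine ⟨cs, hab, le_rfl, TrimOk.of_val_le hW (le_trans hffb ht), TrimWit.nil ht _ cs⟩
      · -- c := c* + 1
        have hc1b : cs + 1 ≤ b := hlt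
        have hnotmem : ¬ (ff W a (cs+1) ≤ mu W (n+1) (cs+1) b) := by
          intro hmem
          have : cs + 1 ≤ cs := hcsmax _ (by
            rw [Finset.mem_filter, Finset.mem_Icc]
            exact ⟨⟨by omega, hc1b⟩, hmem⟩)
          omega
        push_neg at hnotmem
        -- (α) ff a cs ≤ t
        have hα : ff W a cs ≤ t := by
          have := mu_le (W := W) n a b cs hcsa hcsb
          rw [← htdef] at this
          calc ff W a cs = min (ff W a cs) (mu W (n+1) cs b) := (min_eq_left hcsle).symm
            _ ≤ t := this
        -- (β) mu (n+1) (cs+1) b ≤ t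
        have hβ : mu W (n+1) (cs+1) b ≤ t := by
          have := mu_le (W := W) n a b (cs+1) (by omega) hc1b
          rw [← htdef] at this
          calc mu W (n+1) (cs+1) b
              = min (ff W a (cs+1)) (mu W (n+1) (cs+1) b) :=
                (min_eq_right (le_of_lt hnotmem)).symm
            _ ≤ t := this
        refine ⟨cs + 1, by omega, hc1b, Or.inl (by simpa using hα), ?_⟩
        exact TrimWit.mono hβ (n+1) (cs+1) b (ih (n+1) (by omega) (cs+1) b (by omega) hc1b)




/-- The bundle of items with indices in `[lo, hi)`. -/
def iset (m lo hi : ℕ) : Finset (Fin m) :=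
  Finset.univ.filter (fun v => lo ≤ v.val ∧ v.val < hi)

lemma mem_iset {m lo hi : ℕ} {v : Fin m} : v ∈ iset m lo hi ↔ lo ≤ v.val ∧ v.val < hi := by
  simp [iset]

lemma iset_reach (m lo hi : ℕ) :
    ∀ (d : ℕ) (x y : ((iset m lo hi : Finset (Fin m)) : Set (Fin m))),
      (y : Fin m).val = (x : Fin m).val + d →
      ((SimpleGraph.pathGraph m).induce ((iset m lo hi : Finset (Fin m)) : Set (Fin m))).Reachable x y := by
  intro d
  induction d with
  | zero =>
    intro x y h
    have : x = y := by
      apply Subtype.ext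
      apply Fin.ext
      omega
    rw [this]
  | succ d ih =>
    intro x y h
    have hymem : lo ≤ (y : Fin m).val ∧ (y : Fin m).val < hi := mem_iset.mp y.2
    have hxmem : lo ≤ (x : Fin m).val ∧ (x : Fin m).val < hi := mem_iset.mp x.2
    have hx1m : (x : Fin m).val + 1 < m := by
      have := (y : Fin m).isLt
      omega
    have hx'mem : (⟨(x : Fin m).val + 1, hx1m⟩ : Fin m) ∈ iset m lo hi := by
      rw [mem_iset]
      constructor <;> simp <;> omega
    have hadj : ((SimpleGraph.pathGraph m).induce
        ((iset m lo hi : Finset (Fin m)) : Set (Fin m))).Adj x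
        ⟨⟨(x : Fin m).val + 1, hx1m⟩, hx'mem⟩ := by
      show (SimpleGraph.pathGraph m).Adj _ _
      rw [SimpleGraph.pathGraph_adj]
      left
      rfl
    exact (hadj.reachable).trans (ih ⟨⟨(x : Fin m).val + 1, hx1m⟩, hx'mem⟩ y (by simp; omega))

lemma iset_conn (m lo hi : ℕ) : ConnSet (SimpleGraph.pathGraph m) (iset m lo hi) := by
  intro x y
  rcases le_total ((x : Fin m).val) ((y : Fin m).val) with h | h
  · exact iset_reach m lo hi ((y : Fin m).val - (x : Fin m).val) x y (by omega)
  · exact (iset_reach m lo hi ((x : Fin m).val - (y : Fin m).val) y x (by omega)).symm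

lemma iset_erase_left (m lo hi : ℕ) (hm : lo < m) :
    (iset m lo hi).erase ⟨lo, hm⟩ = iset m (lo+1) hi := by
  ext v
  simp only [Finset.mem_erase, mem_iset, Ne, Fin.ext_iff]
  omega

lemma iset_erase_right (m lo hi : ℕ) (hm : hi - 1 < m) :
    (iset m lo hi).erase ⟨hi - 1, hm⟩ = iset m lo (hi - 1) := by
  ext v
  simp only [Finset.mem_erase, mem_iset, Ne, Fin.ext_iff]
  omega


lemma iset_sum (m : ℕ) (w : Fin m → ℝ) (lo hi : ℕ) (hhi : hi ≤ m) :
    ∑ v ∈ iset m lo hi, w v = ff (fun k => if h : k < m then w ⟨k, h⟩ else 0) lo hi := by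
  set W : ℕ → ℝ := fun k => if h : k < m then w ⟨k, h⟩ else 0 with hWdef
  set F : ℕ → ℝ := fun k => if lo ≤ k ∧ k < hi then W k else 0 with hFdef
  have hIco : Finset.Ico lo hi = (Finset.range m).filter (fun k => lo ≤ k ∧ k < hi) := by
    ext k
    simp only [Finset.mem_Ico, Finset.mem_filter, Finset.mem_range]
    omega
  calc ∑ v ∈ iset m lo hi, w v
      = ∑ v : Fin m, (if lo ≤ v.val ∧ v.val < hi then w v else 0) := Finset.sum_filter _ _
    _ = ∑ v : Fin m, F v.val := by
        apply Finset.sum_congr rfl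
        intro v _
        by_cases h : lo ≤ v.val ∧ v.val < hi
        · simp [hFdef, hWdef, h, v.isLt]
        · simp [hFdef, h]
    _ = ∑ k ∈ Finset.range m, F k := Fin.sum_univ_eq_sum_range F m
    _ = ∑ k ∈ Finset.Ico lo hi, W k := by rw [hIco, Finset.sum_filter]
    _ = ff W lo hi := rfl



lemma goodwit_top (W : ℕ → ℝ) (hW : ∀ k, 0 ≤ W k) (n m : ℕ) (hn : 1 ≤ n) :
    ∃ t : ℝ, 0 ≤ t ∧ GoodWit W t n 0 m := by
  refine ⟨mu W n 0 m, mu_nonneg hW n 0 m (by omega), ?_⟩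
  exact combine hW (mu_nonneg hW n 0 m (by omega)) n 0 m
    (mu_attain hW n 0 m hn (by omega)) (trimwit_mu hW n 0 m hn (by omega))

/-- Extract a cut function from a good witness. -/
lemma goodWit_cuts {W : ℕ → ℝ} {t : ℝ} :
    ∀ k a b, GoodWit W t k a b →
      ∃ g : ℕ → ℕ, g 0 = a ∧ (∀ j, g j ≤ g (j+1)) ∧ (∀ j, k ≤ j → g j = b) ∧
        (∀ j, j < k → t ≤ ff W (g j) (g (j+1)) ∧ TrimOk W t (g j) (g (j+1))) := by
  intro k
  induction k with
  | zero =>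
    intro a b h
    exact ⟨fun _ => a, rfl, fun j => le_rfl, fun j _ => h, fun j hj => absurd hj (by omega)⟩
  | succ k ih =>
    intro a b h
    obtain ⟨c, h1, h2, h3, h4, h5⟩ := h
    obtain ⟨g', hg0, hgstep, hgend, hgb⟩ := ih c b h5
    refine ⟨fun j => match j with | 0 => a | j+1 => g' j, rfl, ?_, ?_, ?_⟩
    · intro j
      match j with
      | 0 => show a ≤ g' 0; omega
      | j+1 => exact hgstep j
    · intro j hj
      match j with
      | j+1 => exact hgend j (by omega)
    · intro j hj
      match j with
      | 0 => show t ≤ ff W a (g' 0) ∧ TrimOk W t a (g' 0); rw [hg0]; exact ⟨h3, h4⟩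
      | j+1 => exact hgb j (by omega)


end Stmt12

/-- On a path with identical additive valuations with
nonnegative item values, there is a connected allocation that is both EF1 and
Pareto-optimal. -/
theorem stmt12 {m : ℕ} {N : Type*} [Fintype N] [Nonempty N]
    (w : Fin m → ℝ) (hw : ∀ v, 0 ≤ w v)
    (u : Finset (Fin m) → ℝ)
    (hu : ∀ X, ConnSet (SimpleGraph.pathGraph m) X → u X = ∑ v ∈ X, w v) :
    ∃ π : N → Finset (Fin m),
      IsConnAlloc (SimpleGraph.pathGraph m) π ∧
      EF1 (SimpleGraph.pathGraph m) (fun _ => u) π ∧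
      ParetoOptimal (SimpleGraph.pathGraph m) (fun _ => u) π := by
  classical
  set n := Fintype.card N with hncard
  have hn1 : 1 ≤ n := Fintype.card_pos
  set W : ℕ → ℝ := fun k => if h : k < m then w ⟨k, h⟩ else 0 with hWdef
  have hWpos : ∀ k, 0 ≤ W k := by
    intro k
    by_cases h : k < m
    · simp only [hWdef, dif_pos h]; exact hw _
    · simp only [hWdef, dif_neg h]; exact le_rfl
  obtain ⟨t, ht, hgood⟩ := Stmt12.goodwit_top W hWpos n m hn1
  obtain ⟨g, hg0, hgstep, hgend, hgbundle⟩ := Stmt12.goodWit_cuts n 0 m hgood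
  have hgmono : Monotone g := monotone_nat_of_le_succ hgstep
  have hgm : ∀ j, g j ≤ m := by
    intro j
    rcases le_or_gt n j with h | h
    · rw [hgend j h]
    · calc g j ≤ g n := hgmono (le_of_lt h)
        _ = m := hgend n le_rfl
  set e := Fintype.equivFin N with hedef
  set π : N → Finset (Fin m) := fun i => Stmt12.iset m (g (e i).val) (g ((e i).val + 1)) with hπdef
  -- values of bundles
  have husum : ∀ lo hi, hi ≤ m → u (Stmt12.iset m lo hi) = Stmt12.ff W lo hi := by
    intro lo hi h
    rw [hu _ (Stmt12.iset_conn m lo hi), Stmt12.iset_sum m w lo hi h]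
  have hπval : ∀ i : N, u (π i) = Stmt12.ff W (g (e i).val) (g ((e i).val + 1)) := by
    intro i
    exact husum _ _ (hgm _)
  have hπge : ∀ i : N, t ≤ u (π i) := by
    intro i
    rw [hπval i]
    exact (hgbundle (e i).val (e i).isLt).1
  -- connected allocation
  have hdisj : ∀ (i j : N), i ≠ j → Disjoint (π i) (π j) := by
    have key : ∀ (j j' : ℕ), j < j' →
        Disjoint (Stmt12.iset m (g j) (g (j+1))) (Stmt12.iset m (g j') (g (j'+1))) := by
      intro j j' hjj
      rw [Finset.disjoint_left]
      intro v hv hv'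
      rw [Stmt12.mem_iset] at hv hv'
      have : g (j+1) ≤ g j' := hgmono (by omega)
      omega
    intro i j hij
    have : (e i).val ≠ (e j).val := by
      intro hc
      exact hij (e.injective (Fin.ext hc))
    rcases lt_or_gt_of_ne this with h | h
    · exact key _ _ h
    · exact (key _ _ h).symm
  have hcov : ∀ v : Fin m, ∃ i : N, v ∈ π i := by
    intro v
    obtain ⟨js, hjsmem, hjsmax⟩ : ∃ js ∈ (Finset.range (n+1)).filter (fun j => g j ≤ v.val),
        ∀ x ∈ (Finset.range (n+1)).filter (fun j => g j ≤ v.val), x ≤ js := by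
      have hne : ((Finset.range (n+1)).filter (fun j => g j ≤ v.val)).Nonempty := by
        refine ⟨0, ?_⟩
        rw [Finset.mem_filter, Finset.mem_range, hg0]
        exact ⟨by omega, by omega⟩
      exact ⟨_, Finset.max'_mem _ hne, fun x hx => Finset.le_max' _ x hx⟩
    rw [Finset.mem_filter, Finset.mem_range] at hjsmem
    obtain ⟨hjsn, hjsle⟩ := hjsmem
    have hjslt : js < n := by
      rcases Nat.lt_or_ge js n with h | h
      · exact h
      · exfalso
        have : g js = m := hgend js h
        have := v.isLt
        omega
    have hvlt : v.val < g (js + 1) := by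
      by_contra hc
      push_neg at hc
      have : js + 1 ≤ js := hjsmax _ (by
        rw [Finset.mem_filter, Finset.mem_range]
        exact ⟨by omega, hc⟩)
      omega
    refine ⟨e.symm ⟨js, hjslt⟩, ?_⟩
    rw [hπdef]
    simp only [Equiv.apply_symm_apply]
    rw [Stmt12.mem_iset]
    exact ⟨hjsle, hvlt⟩
  have halloc : IsConnAlloc (SimpleGraph.pathGraph m) π := by
    refine ⟨fun i => Finset.filter_subset _ _, fun i => Stmt12.iset_conn _ _ _, hdisj, ?_⟩
    intro v _
    exact hcov v
  -- total sum lemma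
  have htot : ∀ (ψ : N → Finset (Fin m)), IsConnAlloc (SimpleGraph.pathGraph m) ψ →
      ∑ i : N, u (ψ i) = ∑ v : Fin m, w v := by
    intro ψ hψ
    obtain ⟨hsub, hconn, hdisjψ, hcovψ⟩ := hψ
    have h1 : ∀ i : N, u (ψ i) = ∑ v ∈ ψ i, w v := fun i => hu _ (hconn i)
    have h2 : (Finset.univ : Finset N).biUnion ψ = Finset.univ := by
      apply Finset.eq_univ_of_forall
      intro v
      rw [Finset.mem_biUnion]
      obtain ⟨i, hi⟩ := hcovψ v (Finset.mem_univ v)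
      exact ⟨i, Finset.mem_univ i, hi⟩
    calc ∑ i : N, u (ψ i) = ∑ i : N, ∑ v ∈ ψ i, w v := Finset.sum_congr rfl (fun i _ => h1 i)
      _ = ∑ v ∈ (Finset.univ : Finset N).biUnion ψ, w v := by
          rw [Finset.sum_biUnion]
          intro i _ j _ hij
          exact hdisjψ i j hij
      _ = ∑ v : Fin m, w v := by rw [h2]
  refine ⟨π, halloc, ?_, ?_⟩
  · -- EF1
    intro i j
    set a := g (e j).val with hadef
    set b := g ((e j).val + 1) with hbdef
    have hb_m : b ≤ m := hgm _
    have hab : a ≤ b := hgstep _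
    have htrim : Stmt12.TrimOk W t a b := (hgbundle (e j).val (e j).isLt).2
    rcases le_or_gt (u (π j)) (u (π i)) with h | h
    · exact Or.inl h
    · right
      have hπjval : u (π j) = Stmt12.ff W a b := hπval j
      have hablt : a < b := by
        rcases Nat.lt_or_ge a b with h' | h'
        · exact h'
        · exfalso
          rw [hπjval, Stmt12.ff_zero_of_le h'] at h
          have := hπge i
          linarith
      rcases htrim with htr | htr
      · -- remove right endpoint
        have hbm : b - 1 < m := by omega
        refine ⟨⟨b - 1, hbm⟩, ?_, ?_, ?_⟩
        · rw [hπdef]; rw [Stmt12.mem_iset]; constructor <;> simp <;> omega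
        · show ConnSet _ ((π j).erase _)
          rw [hπdef]
          simp only []
          rw [Stmt12.iset_erase_right m a b hbm]
          exact Stmt12.iset_conn _ _ _
        · rw [hπdef]
          simp only []
          rw [Stmt12.iset_erase_right m a b hbm, husum a (b-1) (by omega)]
          exact le_trans htr (hπge i)
      · -- remove left endpoint
        have ham : a < m := by omega
        refine ⟨⟨a, ham⟩, ?_, ?_, ?_⟩
        · rw [hπdef]; rw [Stmt12.mem_iset]; constructor <;> simp <;> omega
        · show ConnSet _ ((π j).erase _)
          rw [hπdef]
          simp only []
          rw [Stmt12.iset_erase_left m a b ham]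
          exact Stmt12.iset_conn _ _ _
        · rw [hπdef]
          simp only []
          rw [Stmt12.iset_erase_left m a b ham, husum (a+1) b hb_m]
          exact le_trans htr (hπge i)
  · -- Pareto optimality
    intro π' hπ' himp
    obtain ⟨hle, i₀, hlt⟩ := himp
    have hsum : ∑ i : N, u (π i) < ∑ i : N, u (π' i) :=
      Finset.sum_lt_sum (fun i _ => hle i) ⟨i₀, Finset.mem_univ _, hlt⟩
    rw [htot π halloc, htot π' hπ'] at hsum
    exact lt_irrefl _ hsum
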